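/- arXiv:1707.05928 — 3 statements merged into one kernel-verified Lean document; each statement's English description precedes it below -/
import Mathlib

section
/- Let g : Finset α → ℝ, let k : α → ℝ with k(e) > 0 for every e, let K > 0 and v ≥ 0 be reals, let S be a finset and e ∉ S an element with k(S) + k(e) ≤ K. If g(S) ≥ v·k(S)/(2K) and the threshold condition g(S ∪ {e}) − g(S) ≥ k(e)·(v/2 − g(S))/(K − k(S)) holds, then g(S ∪ {e}) ≥ v·k(S ∪ {e})/(2K). -/
/-- Single-step invariant of the streaming algorithm (Algorithm 2): if the bucket `S`
satisfies the running invariant `g S ≥ v·k(S)/(2K)` and the threshold condition holds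
for a new element `e` that fits in the budget, then the invariant holds for `insert e S`. -/
theorem stmt_1 {α : Type*} [DecidableEq α]
    (g : Finset α → ℝ) (k : α → ℝ) (K v : ℝ)
    (hk : ∀ e, 0 < k e) (hK : 0 < K) (hv : 0 ≤ v)
    (S : Finset α) (e : α) (he : e ∉ S)
    (hbudget : (∑ x ∈ S, k x) + k e ≤ K)
    (hinv : v * (∑ x ∈ S, k x) / (2 * K) ≤ g S)
    (hthresh : k e * (v / 2 - g S) / (K - ∑ x ∈ S, k x) ≤ g (insert e S) - g S) :
    v * (∑ x ∈ insert e S, k x) / (2 * K) ≤ g (insert e S) := by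
  have hke := hk e
  set s := ∑ x ∈ S, k x with hs
  rw [Finset.sum_insert he]
  have hD : 0 < K - s := by linarith
  have hth : k e * (v / 2 - g S) ≤ (g (insert e S) - g S) * (K - s) := by
    have := (div_le_iff₀ hD).mp hthresh
    linarith
  rw [div_le_iff₀ (by linarith : (0:ℝ) < 2 * K)]
  have hinv' : v * s ≤ g S * (2 * K) := (div_le_iff₀ (by linarith)).mp hinv
  nlinarith [mul_le_mul_of_nonneg_left hth (by positivity : (0:ℝ) ≤ 2 * K),
    mul_le_mul_of_nonneg_left hinv' (le_of_lt (sub_pos.mpr (by linarith : s + k e < K + k e))),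
    mul_nonneg hv hke.le, mul_nonneg (mul_nonneg hv hke.le) hD.le]
end

section
/- Let g : Finset α → ℝ with g(∅) = 0, let k : α → ℝ with k(e) > 0 for every e, let K > 0 and v ≥ 0 be reals. Let e₁, …, eₙ be distinct elements, and set S₀ := ∅ and S_j := S_{j−1} ∪ {e_j} for 1 ≤ j ≤ n. Suppose that for every j, k(S_{j−1}) + k(e_j) ≤ K and g(S_j) − g(S_{j−1}) ≥ k(e_j)·(v/2 − g(S_{j−1}))/(K − k(S_{j−1})). Then g(Sₙ) ≥ v·k(Sₙ)/(2K). -/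
/-- Running invariant of each bucket of the streaming algorithm (Algorithm 2):
starting from the empty set and adding distinct elements `e 0, …, e (n-1)` one at a time,
each addition respecting the budget and the threshold condition, the final set `S n`
satisfies `g (S n) ≥ v·k(S n)/(2K)`. -/
theorem stmt_2 {α : Type*} [DecidableEq α]
    (g : Finset α → ℝ) (k : α → ℝ) (K v : ℝ)
    (hg0 : g ∅ = 0) (hk : ∀ e, 0 < k e) (hK : 0 < K) (hv : 0 ≤ v)
    (n : ℕ) (e : ℕ → α) (hinj : Set.InjOn e (Set.Iio n))
    (S : ℕ → Finset α) (hS0 : S 0 = ∅)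
    (hSstep : ∀ j < n, S (j + 1) = insert (e j) (S j))
    (hbudget : ∀ j < n, (∑ x ∈ S j, k x) + k (e j) ≤ K)
    (hthresh : ∀ j < n,
      k (e j) * (v / 2 - g (S j)) / (K - ∑ x ∈ S j, k x) ≤ g (S (j + 1)) - g (S j)) :
    v * (∑ x ∈ S n, k x) / (2 * K) ≤ g (S n) := by
  suffices h : ∀ m, m ≤ n → v * (∑ x ∈ S m, k x) / (2 * K) ≤ g (S m) from h n le_rfl
  intro m hm
  induction m with
  | zero => simp [hS0, hg0]
  | succ j ih =>
    have hjn : j < n := hm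
    have ihj := ih (le_of_lt hjn)
    set c := ∑ x ∈ S j, k x with hc
    have ha : 0 < k (e j) := hk (e j)
    have hb : c + k (e j) ≤ K := hbudget j hjn
    have hD : 0 < K - c := by linarith
    by_cases he : e j ∈ S j
    · have hSe : S (j + 1) = S j := by rw [hSstep j hjn, Finset.insert_eq_self.mpr he]
      rw [hSe]; exact ihj
    · have hsum : ∑ x ∈ S (j + 1), k x = k (e j) + c := by
        rw [hSstep j hjn, Finset.sum_insert he]
      have hth : k (e j) * (v / 2 - g (S j)) / (K - c) ≤ g (S (j+1)) - g (S j) := hthresh j hjn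
      have hth' : k (e j) * (v / 2 - g (S j)) ≤ (g (S (j+1)) - g (S j)) * (K - c) :=
        (div_le_iff₀ hD).mp hth
      have hG : v * c ≤ g (S j) * (2 * K) := (div_le_iff₀ (by linarith)).mp ihj
      rw [hsum, div_le_iff₀ (by linarith : (0:ℝ) < 2 * K)]
      nlinarith [mul_le_mul_of_nonneg_left hth' (by linarith : (0:ℝ) ≤ 2 * K),
        mul_nonneg (by linarith : (0:ℝ) ≤ K - c - k (e j)) (by linarith : (0:ℝ) ≤ g (S j) * (2*K) - v * c)]
end

section
/- Let g : Finset α → ℝ be a monotone submodular set function, let k : α → ℝ with k(e) > 0 for every e, let K > 0 and v be reals, and let S and T be finsets with k(S) < K, k(T \ S) ≤ K, and g(S) ≤ v/2. Suppose that every element e ∈ T \ S satisfies g(S ∪ {e}) − g(S) ≤ k(e)·(v/2 − g(S))/(K − k(S)). Then g(T) ≤ g(S) + K·(v/2 − g(S))/(K − k(S)). -/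
/-- Stream-end case of the analysis of Algorithm 2: if every element of `T \ S`
failed the threshold test for bucket `S`, then `g T` is bounded in terms of `g S`. -/
theorem stmt_8 {α : Type*} [DecidableEq α]
    (g : Finset α → ℝ) (k : α → ℝ) (K v : ℝ)
    (hmono : ∀ S T : Finset α, S ⊆ T → g S ≤ g T)
    (hsub : ∀ S T : Finset α, g (S ∪ T) + g (S ∩ T) ≤ g S + g T)
    (hk : ∀ e, 0 < k e) (hK : 0 < K)
    (S T : Finset α)
    (hS : (∑ x ∈ S, k x) < K)
    (hT : (∑ x ∈ T \ S, k x) ≤ K)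
    (hgS : g S ≤ v / 2)
    (hthresh : ∀ e ∈ T \ S,
      g (insert e S) - g S ≤ k e * (v / 2 - g S) / (K - ∑ x ∈ S, k x)) :
    g T ≤ g S + K * (v / 2 - g S) / (K - ∑ x ∈ S, k x) := by
  set D := K - ∑ x ∈ S, k x with hD
  have hDpos : 0 < D := by simp [hD]; linarith
  have key : ∀ A : Finset α, Disjoint A S →
      g (S ∪ A) ≤ g S + ∑ e ∈ A, (g (insert e S) - g S) := by
    intro A
    induction A using Finset.induction_on with
    | empty => intro _; simp
    | @insert a A ha ih =>
      intro hdisj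
      have hdisjA : Disjoint A S := (Finset.disjoint_insert_left.mp hdisj).2
      have haS : a ∉ S := (Finset.disjoint_insert_left.mp hdisj).1
      have hunion : S ∪ insert a A = (S ∪ A) ∪ insert a S := by
        ext x; simp [Finset.mem_insert, Finset.mem_union]; tauto
      have hinter : (S ∪ A) ∩ insert a S = S := by
        ext x; simp [Finset.mem_insert, Finset.mem_union, Finset.mem_inter]
        constructor
        · rintro ⟨h1 | h1, h2 | h2⟩ <;> first | exact h1 | exact h2 |
            (exact absurd (h2 ▸ h1) ha)
        · intro h; tauto
      have := hsub (S ∪ A) (insert a S)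
      rw [← hunion, hinter] at this
      have hsum : ∑ e ∈ insert a A, (g (insert e S) - g S)
          = (g (insert a S) - g S) + ∑ e ∈ A, (g (insert e S) - g S) :=
        Finset.sum_insert ha
      have := ih hdisjA
      rw [hsum]
      linarith
  have h1 : g T ≤ g (S ∪ (T \ S)) := by
    apply hmono
    intro x hx
    simp [Finset.mem_union, Finset.mem_sdiff, hx]
  have h2 := key (T \ S) (Finset.sdiff_disjoint)
  have h3 : ∑ e ∈ T \ S, (g (insert e S) - g S)
      ≤ ∑ e ∈ T \ S, k e * (v / 2 - g S) / D :=
    Finset.sum_le_sum hthresh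
  have h4 : ∑ e ∈ T \ S, k e * (v / 2 - g S) / D
      = (∑ e ∈ T \ S, k e) * ((v / 2 - g S) / D) := by
    rw [Finset.sum_mul]
    exact Finset.sum_congr rfl fun e _ => by ring
  have h5 : (∑ e ∈ T \ S, k e) * ((v / 2 - g S) / D)
      ≤ K * ((v / 2 - g S) / D) := by
    apply mul_le_mul_of_nonneg_right hT
    exact div_nonneg (by linarith) hDpos.le
  have : K * ((v / 2 - g S) / D) = K * (v / 2 - g S) / D := by ring
  linarith
end
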